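/- arXiv:1006.4403 — 3 statements merged into one kernel-verified Lean document; each statement's English description precedes it below -/
import Mathlib

section
/- Let y_1,…,y_s : R^s → R be functions with each y_i nowhere zero, let α_1,…,α_s : R^s → R be functions, and set y_0 = α_1 y_1 + … + α_s y_s. Assume y_0 is nowhere zero, each α_i is nowhere zero, and let h_1,…,h_s be positive integers. Then 1/(y_0 · Π_{i=1}^s y_i^{h_i}) can be written as a finite linear combination of terms of the form f / Π_{i∈{0,…,s}∖{k}} y_i^{t_i}, where for each term k ∈ {1,…,s}, f is a product of powers α_1^{m_1}···α_s^{m_s} with m_i ∈ N, the t_i are nonnegative integers, and Σ_{i∈{0,…,s}∖{k}} t_i = 1 + Σ_{i=1}^s h_i. -/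
open Finset

section Aux

variable {s : ℕ} (y α : Fin s → (Fin s → ℝ) → ℝ) (y₀ : (Fin s → ℝ) → ℝ)

/-- Representability as a finite linear combination of the desired terms. -/
def PFRep (N : ℕ) (F : (Fin s → ℝ) → ℝ) : Prop :=
  ∃ (M : ℕ) (c : Fin M → ℝ) (k : Fin M → Fin s) (m : Fin M → Fin s → ℕ)
    (t₀ : Fin M → ℕ) (t : Fin M → Fin s → ℕ),
    (∀ j, t₀ j + ∑ i ∈ Finset.univ.erase (k j), t j i = N) ∧
    ∀ x : Fin s → ℝ,
      F x = ∑ j, c j * (∏ i, α i x ^ m j i) /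
          (y₀ x ^ t₀ j * ∏ i ∈ Finset.univ.erase (k j), y i x ^ t j i)

lemma PFRep.zero (N : ℕ) : PFRep y α y₀ N (fun _ => 0) :=
  ⟨0, ![], ![], ![], ![], ![], by simp, by simp⟩

lemma PFRep.add {N : ℕ} {F G : (Fin s → ℝ) → ℝ}
    (hF : PFRep y α y₀ N F) (hG : PFRep y α y₀ N G) :
    PFRep y α y₀ N (fun x => F x + G x) := by
  obtain ⟨M₁, c₁, k₁, m₁, t₀₁, t₁, hd₁, hv₁⟩ := hF
  obtain ⟨M₂, c₂, k₂, m₂, t₀₂, t₂, hd₂, hv₂⟩ := hG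
  refine ⟨M₁ + M₂, Fin.append c₁ c₂, Fin.append k₁ k₂, Fin.append m₁ m₂,
    Fin.append t₀₁ t₀₂, Fin.append t₁ t₂, ?_, ?_⟩
  · intro j
    refine Fin.addCases (fun p => ?_) (fun p => ?_) j <;>
      simp [Fin.append_left, Fin.append_right, hd₁, hd₂]
  · intro x
    rw [Fin.sum_univ_add]
    simp only [Fin.append_left, Fin.append_right]
    rw [hv₁ x, hv₂ x]

lemma PFRep.sum {N : ℕ} {p : ℕ} (G : Fin p → (Fin s → ℝ) → ℝ)
    (hG : ∀ j, PFRep y α y₀ N (G j)) :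
    PFRep y α y₀ N (fun x => ∑ j, G j x) := by
  suffices H : ∀ T : Finset (Fin p), PFRep y α y₀ N (fun x => ∑ j ∈ T, G j x) from H univ
  intro T
  induction T using Finset.cons_induction with
  | empty => simpa using PFRep.zero y α y₀ N
  | cons a T ha ih =>
      simp only [Finset.sum_cons]
      exact PFRep.add y α y₀ (hG a) ih

lemma PFRep.mul_alpha {N : ℕ} {F : (Fin s → ℝ) → ℝ} (j : Fin s)
    (hF : PFRep y α y₀ N F) :
    PFRep y α y₀ N (fun x => α j x * F x) := by
  obtain ⟨M, c, k, m, t₀, t, hd, hv⟩ := hF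
  refine ⟨M, c, k, (fun p i => m p i + (if i = j then 1 else 0)), t₀, t, hd, ?_⟩
  intro x
  show α j x * F x = _
  rw [hv x, Finset.mul_sum]
  refine Finset.sum_congr rfl fun p _ => ?_
  have : (∏ i, α i x ^ (m p i + (if i = j then 1 else 0)))
      = α j x * ∏ i, α i x ^ m p i := by
    simp only [pow_add, Finset.prod_mul_distrib]
    have : (∏ i, α i x ^ (if i = j then 1 else 0)) = α j x := by
      rw [Finset.prod_eq_single j] <;> simp +contextual
    rw [this]; ring
  rw [this]; ring

lemma pf_key (hy : ∀ i x, y i x ≠ 0) (hα : ∀ i x, α i x ≠ 0)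
    (hy₀def : ∀ x, y₀ x = ∑ i, α i x * y i x) (hy₀ : ∀ x, y₀ x ≠ 0) :
    ∀ (n a : ℕ) (b : Fin s → ℕ), 1 ≤ a → (∑ i, b i) ≤ n →
      PFRep y α y₀ (a + ∑ i, b i) (fun x => (y₀ x ^ a * ∏ i, y i x ^ b i)⁻¹) := by
  -- rule out s = 0
  rcases Nat.eq_zero_or_pos s with hs | hs
  · exfalso
    subst hs
    have := hy₀ (fun i => i.elim0)
    rw [hy₀def] at this
    simpa using this
  intro n
  induction n with
  | zero =>
      intro a b ha hb
      -- all b i = 0, in particular b ⟨0,hs⟩ = 0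
      have hbz : ∀ i, b i = 0 := by
        intro i
        have := Finset.single_le_sum (f := b) (fun i _ => Nat.zero_le _) (Finset.mem_univ i)
        omega
      refine ⟨1, fun _ => 1, fun _ => ⟨0, hs⟩, fun _ _ => 0, fun _ => a, fun _ => b, ?_, ?_⟩
      · intro j
        rw [Finset.sum_erase _ (by simp [hbz])]
      · intro x
        show (y₀ x ^ a * ∏ i, y i x ^ b i)⁻¹ = _
        have hP : ∏ i ∈ univ.erase (⟨0, hs⟩ : Fin s), y i x ^ b i = ∏ i, y i x ^ b i :=
          Finset.prod_erase _ (by simp [hbz])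
        simp [Fin.sum_univ_one, hP, one_div]
  | succ n ih =>
      intro a b ha hb
      by_cases hk : ∃ k, b k = 0
      · obtain ⟨k₀, hk₀⟩ := hk
        refine ⟨1, fun _ => 1, fun _ => k₀, fun _ _ => 0, fun _ => a, fun _ => b, ?_, ?_⟩
        · intro j
          rw [Finset.sum_erase _ (by simp [hk₀])]
        · intro x
          show (y₀ x ^ a * ∏ i, y i x ^ b i)⁻¹ = _
          have hP : ∏ i ∈ univ.erase k₀, y i x ^ b i = ∏ i, y i x ^ b i :=
            Finset.prod_erase _ (by simp [hk₀])
          simp [Fin.sum_univ_one, hP, one_div]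
      · push_neg at hk
        have hb1 : ∀ i, 1 ≤ b i := fun i => Nat.one_le_iff_ne_zero.mpr (hk i)
        -- the reduced exponents
        set b' : Fin s → Fin s → ℕ := fun j i => b i - (if i = j then 1 else 0) with hb'
        have hsum' : ∀ j, (∑ i, b' j i) + 1 = ∑ i, b i := by
          intro j
          have : ∀ i, b i = b' j i + (if i = j then 1 else 0) := by
            intro i
            simp only [hb']
            split <;> [skip; omega]
            · have := hb1 i; omega
          calc (∑ i, b' j i) + 1
              = (∑ i, b' j i) + ∑ i, (if i = j then 1 else 0) := by
                rw [Finset.sum_ite_eq' univ j (fun _ => 1)]; simp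
            _ = ∑ i, (b' j i + (if i = j then 1 else 0)) := by rw [Finset.sum_add_distrib]
            _ = ∑ i, b i := by exact Finset.sum_congr rfl fun i _ => (this i).symm
        -- the key pointwise identity
        have hid : ∀ x, (y₀ x ^ a * ∏ i, y i x ^ b i)⁻¹
            = ∑ j, α j x * (y₀ x ^ (a + 1) * ∏ i, y i x ^ b' j i)⁻¹ := by
          intro x
          have hP : (∏ i, y i x ^ b i) ≠ 0 :=
            Finset.prod_ne_zero_iff.mpr fun i _ => pow_ne_zero _ (hy i x)
          have hprod : ∀ j, (∏ i, y i x ^ b' j i) * y j x = ∏ i, y i x ^ b i := by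
            intro j
            rw [← Finset.prod_erase_mul univ _ (Finset.mem_univ j),
                ← Finset.prod_erase_mul univ (f := fun i => y i x ^ b i) (Finset.mem_univ j)]
            have hE : ∀ i ∈ univ.erase j, y i x ^ b' j i = y i x ^ b i := by
              intro i hi
              have : i ≠ j := (Finset.mem_erase.mp hi).1
              simp [hb', this]
            rw [Finset.prod_congr rfl hE]
            have : b' j j = b j - 1 := by simp [hb']
            rw [this, mul_assoc, ← pow_succ, Nat.sub_add_cancel (hb1 j)]
          have hterm : ∀ j, α j x * (y₀ x ^ (a + 1) * ∏ i, y i x ^ b' j i)⁻¹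
              = (α j x * y j x) * (y₀ x ^ (a + 1) * ∏ i, y i x ^ b i)⁻¹ := by
            intro j
            rw [← hprod j,
              show y₀ x ^ (a + 1) * ((∏ i, y i x ^ b' j i) * y j x)
                  = (y₀ x ^ (a + 1) * ∏ i, y i x ^ b' j i) * y j x by ring,
              mul_inv (y₀ x ^ (a + 1) * ∏ i, y i x ^ b' j i) (y j x),
              show α j x * y j x * ((y₀ x ^ (a + 1) * ∏ i, y i x ^ b' j i)⁻¹ * (y j x)⁻¹)
                  = α j x * (y₀ x ^ (a + 1) * ∏ i, y i x ^ b' j i)⁻¹ * (y j x * (y j x)⁻¹)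
                by ring,
              mul_inv_cancel₀ (hy j x), mul_one]
          calc (y₀ x ^ a * ∏ i, y i x ^ b i)⁻¹
              = (∑ j, α j x * y j x) * (y₀ x ^ (a + 1) * ∏ i, y i x ^ b i)⁻¹ := by
                rw [← hy₀def x,
                  show y₀ x ^ (a + 1) * ∏ i, y i x ^ b i
                      = (y₀ x ^ a * ∏ i, y i x ^ b i) * y₀ x by rw [pow_succ]; ring,
                  mul_inv (y₀ x ^ a * ∏ i, y i x ^ b i) (y₀ x),
                  show y₀ x * ((y₀ x ^ a * ∏ i, y i x ^ b i)⁻¹ * (y₀ x)⁻¹)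
                      = (y₀ x * (y₀ x)⁻¹) * (y₀ x ^ a * ∏ i, y i x ^ b i)⁻¹ by ring,
                  mul_inv_cancel₀ (hy₀ x), one_mul]
            _ = ∑ j, (α j x * y j x) * (y₀ x ^ (a + 1) * ∏ i, y i x ^ b i)⁻¹ := by
                rw [Finset.sum_mul]
            _ = ∑ j, α j x * (y₀ x ^ (a + 1) * ∏ i, y i x ^ b' j i)⁻¹ := by
                exact Finset.sum_congr rfl fun j _ => (hterm j).symm
        -- assemble
        have hrep : ∀ j : Fin s, PFRep y α y₀ (a + ∑ i, b i)
            (fun x => α j x * (y₀ x ^ (a + 1) * ∏ i, y i x ^ b' j i)⁻¹) := by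
          intro j
          have h1 : PFRep y α y₀ ((a + 1) + ∑ i, b' j i)
              (fun x => (y₀ x ^ (a + 1) * ∏ i, y i x ^ b' j i)⁻¹) := by
            apply ih (a + 1) (b' j) (by omega)
            have := hsum' j; omega
          have heq : (a + 1) + ∑ i, b' j i = a + ∑ i, b i := by
            have := hsum' j; omega
          rw [heq] at h1
          exact PFRep.mul_alpha y α y₀ j h1
        have := PFRep.sum y α y₀
          (fun j x => α j x * (y₀ x ^ (a + 1) * ∏ i, y i x ^ b' j i)⁻¹) hrep
        obtain ⟨M, c, k, m, t₀, t, hd, hv⟩ := this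
        refine ⟨M, c, k, m, t₀, t, hd, fun x => ?_⟩
        show (y₀ x ^ a * ∏ i, y i x ^ b i)⁻¹ = _
        rw [hid x]
        simpa using hv x

end Aux

/-- Lemma 1: Let `y₁,…,y_s, α₁,…,α_s : ℝ^s → ℝ` be nowhere-zero functions and set
`y₀ = ∑ αᵢ yᵢ`, assumed nowhere zero. For positive integers `h₁,…,h_s`, the function
`1/(y₀ ∏ yᵢ^{hᵢ})` is a finite linear combination of terms
`(∏ αᵢ^{mᵢ}) / ∏_{i ∈ {0,…,s}∖{k}} yᵢ^{tᵢ}` with `k ∈ {1,…,s}` and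
`∑_{i ∈ {0,…,s}∖{k}} tᵢ = 1 + ∑ hᵢ`. -/
theorem partial_fraction_reduction_functions
    {s : ℕ} (y : Fin s → (Fin s → ℝ) → ℝ) (α : Fin s → (Fin s → ℝ) → ℝ)
    (hy : ∀ i x, y i x ≠ 0) (hα : ∀ i x, α i x ≠ 0)
    (y₀ : (Fin s → ℝ) → ℝ) (hy₀def : ∀ x, y₀ x = ∑ i, α i x * y i x)
    (hy₀ : ∀ x, y₀ x ≠ 0)
    (h : Fin s → ℕ) (hh : ∀ i, 1 ≤ h i) :
    ∃ (M : ℕ) (c : Fin M → ℝ) (k : Fin M → Fin s) (m : Fin M → Fin s → ℕ)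
      (t₀ : Fin M → ℕ) (t : Fin M → Fin s → ℕ),
      (∀ j, t₀ j + ∑ i ∈ Finset.univ.erase (k j), t j i = 1 + ∑ i, h i) ∧
      ∀ x : Fin s → ℝ,
        (y₀ x * ∏ i, y i x ^ h i)⁻¹ =
          ∑ j, c j * (∏ i, α i x ^ m j i) /
            (y₀ x ^ t₀ j * ∏ i ∈ Finset.univ.erase (k j), y i x ^ t j i) := by
  obtain ⟨M, c, k, m, t₀, t, hd, hv⟩ :=
    pf_key y α y₀ hy hα hy₀def hy₀ (∑ i, h i) 1 h le_rfl le_rfl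
  refine ⟨M, c, k, m, t₀, t, hd, fun x => ?_⟩
  simpa [pow_one] using hv x
end

section
/- Let X = {(1,0), (0,1), (−1,2)} ⊂ Z². For (x,y) ∈ Z², let t_X(x,y) = #{(β_1,β_2,β_3) ∈ N³ : β_1(1,0) + β_2(0,1) + β_3(−1,2) = (x,y)}. Then t_X(x,y) = ((2x+y+2)/2)·t_{A_1}(x,y) + ((2x+y+1)/2)·t_{A_1}(x,y−1) − x·t_{A_2}(x,y), where A_1 = {(1,0),(−1,2)}, A_2 = {(1,0),(0,1)}, and t_{A_i} are the corresponding (0/1-valued) partition functions of the independent sets A_i. -/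
lemma cardX_eq (x y : ℤ) :
    Nat.card {β : ℕ × ℕ × ℕ //
        (β.1 : ℤ) - β.2.2 = x ∧ (β.2.1 : ℤ) + 2 * β.2.2 = y} =
      (y / 2 + 1 - max 0 (-x)).toNat := by
  have e : {β : ℕ × ℕ × ℕ //
        (β.1 : ℤ) - β.2.2 = x ∧ (β.2.1 : ℤ) + 2 * β.2.2 = y} ≃
      (Finset.Icc (max 0 (-x)) (y / 2) : Finset ℤ) :=
    { toFun := fun β => ⟨(β.1.2.2 : ℤ), by
        have h := β.2
        simp only [Finset.mem_Icc]
        omega⟩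
      invFun := fun t => ⟨((x + t.1).toNat, (y - 2 * t.1).toNat, t.1.toNat), by
        have h := t.2
        simp only [Finset.mem_Icc] at h
        refine ⟨?_, ?_⟩ <;> dsimp only <;> omega⟩
      left_inv := fun β => by
        have h := β.2
        ext <;> simp <;> omega
      right_inv := fun t => by
        have h := t.2
        simp only [Finset.mem_Icc] at h
        ext
        dsimp only
        omega }
  rw [Nat.card_congr e, Nat.card_eq_finsetCard, Int.card_Icc]

lemma cardA1_eq (x y : ℤ) :
    Nat.card {β : ℕ × ℕ // (β.1 : ℤ) - β.2 = x ∧ 2 * (β.2 : ℤ) = y} =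
      if 2 ∣ y ∧ 0 ≤ y ∧ 0 ≤ x + y / 2 then 1 else 0 := by
  split_ifs with h
  · rw [Nat.card_eq_one_iff_unique]
    constructor
    · constructor
      intro a b
      have ha := a.2; have hb := b.2
      ext <;> omega
    · exact ⟨⟨(x + y / 2).toNat, (y / 2).toNat⟩, by constructor <;> push_cast <;> omega⟩
  · rw [Nat.card_eq_zero]
    left
    constructor
    intro a
    have ha := a.2
    omega

lemma cardA2_eq (x y : ℤ) :
    Nat.card {β : ℕ × ℕ // (β.1 : ℤ) = x ∧ (β.2 : ℤ) = y} =
      if 0 ≤ x ∧ 0 ≤ y then 1 else 0 := by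
  split_ifs with h
  · rw [Nat.card_eq_one_iff_unique]
    constructor
    · constructor
      intro a b
      have ha := a.2; have hb := b.2
      ext <;> omega
    · exact ⟨⟨x.toNat, y.toNat⟩, by constructor <;> omega⟩
  · rw [Nat.card_eq_zero]
    left
    constructor
    intro a
    have ha := a.2
    omega

/-- Example 2: for `X = {(1,0),(0,1),(−1,2)} ⊂ ℤ²`,
`t_X(x,y) = ((2x+y+2)/2)·t_{A₁}(x,y) + ((2x+y+1)/2)·t_{A₁}(x,y−1) − x·t_{A₂}(x,y)`,
where `A₁ = {(1,0),(−1,2)}` and `A₂ = {(1,0),(0,1)}`. -/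
theorem discrete_truncated_power_example2 (x y : ℤ) :
    (Nat.card {β : ℕ × ℕ × ℕ //
        (β.1 : ℤ) - β.2.2 = x ∧ (β.2.1 : ℤ) + 2 * β.2.2 = y} : ℚ) =
      (2 * (x : ℚ) + y + 2) / 2 *
        (Nat.card {β : ℕ × ℕ // (β.1 : ℤ) - β.2 = x ∧ 2 * (β.2 : ℤ) = y} : ℚ) +
      (2 * (x : ℚ) + y + 1) / 2 *
        (Nat.card {β : ℕ × ℕ // (β.1 : ℤ) - β.2 = x ∧ 2 * (β.2 : ℤ) = y - 1} : ℚ) -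
      (x : ℚ) *
        (Nat.card {β : ℕ × ℕ // (β.1 : ℤ) = x ∧ (β.2 : ℤ) = y} : ℚ) := by
  rw [cardX_eq, cardA1_eq, cardA1_eq, cardA2_eq]
  have key : (2 * ((y / 2 + 1 - max 0 (-x)).toNat : ℤ)) =
      (2 * x + y + 2) * (if 2 ∣ y ∧ 0 ≤ y ∧ 0 ≤ x + y / 2 then 1 else 0) +
      (2 * x + y + 1) * (if 2 ∣ (y - 1) ∧ 0 ≤ y - 1 ∧ 0 ≤ x + (y - 1) / 2 then 1 else 0) -
      2 * x * (if 0 ≤ x ∧ 0 ≤ y then 1 else 0) := by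
    split_ifs <;> omega
  have keyQ : (2 * (((y / 2 + 1 - max 0 (-x)).toNat : ℕ) : ℚ)) =
      (2 * x + y + 2) * (if 2 ∣ y ∧ 0 ≤ y ∧ 0 ≤ x + y / 2 then 1 else 0) +
      (2 * x + y + 1) * (if 2 ∣ (y - 1) ∧ 0 ≤ y - 1 ∧ 0 ≤ x + (y - 1) / 2 then 1 else 0) -
      2 * x * (if 0 ≤ x ∧ 0 ≤ y then 1 else 0) := by
    exact_mod_cast key
  push_cast [apply_ite (fun n : ℕ => (n : ℚ))] at keyQ ⊢
  linarith [keyQ]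
end

section
/- Let X ⊂ Z^s ∖ {0} be a finite multiset spanning R^s, such that 0 is not a nontrivial nonnegative real combination of elements of X. Then the function Π_{a∈X} 1/(1−e^{−⟨a,x⟩}) (defined on the open set where all ⟨a,x⟩ > 0) can be written as a finite linear combination with real coefficients of functions of the form e^{⟨c,x⟩} · Π_{a∈A} 1/(1−e^{−⟨a,x⟩})^{h_a}, where A is a linearly independent set of s vectors, each a ∈ A a positive integer multiple of an element of X, h_a ∈ N with Σ_{a∈A} h_a = #X, and c is an integer linear combination of elements of X. -/
open Real

open Real Finset

namespace ToricRed

variable {s N : ℕ}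

/-- pairing of an integer vector with a real vector -/
def pr (a : Fin s → ℤ) (x : Fin s → ℝ) : ℝ := ∑ j, (a j : ℝ) * x j

lemma pr_add (a b : Fin s → ℤ) (x : Fin s → ℝ) : pr (a + b) x = pr a x + pr b x := by
  simp [pr, add_mul, Finset.sum_add_distrib]

lemma pr_zsmul (t : ℤ) (a : Fin s → ℤ) (x : Fin s → ℝ) : pr (t • a) x = t * pr a x := by
  simp only [pr, Finset.mul_sum]
  exact Finset.sum_congr rfl fun j _ => by
    rw [Pi.smul_apply, smul_eq_mul]; push_cast; ring

lemma pr_zero (x : Fin s → ℝ) : pr (0 : Fin s → ℤ) x = 0 := by simp [pr]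

lemma pr_sum {ι : Type*} (T : Finset ι) (f : ι → (Fin s → ℤ)) (x : Fin s → ℝ) :
    pr (∑ l ∈ T, f l) x = ∑ l ∈ T, pr (f l) x := by
  classical
  induction T using Finset.induction_on with
  | empty => simp [pr_zero]
  | insert _ _ h ih => rw [Finset.sum_insert h, Finset.sum_insert h, pr_add, ih]

/-- `z v x = e^{-⟨v,x⟩}` -/
noncomputable def z (v : Fin s → ℤ) (x : Fin s → ℝ) : ℝ := Real.exp (-pr v x)

/-- `E c x = e^{⟨c,x⟩}` -/
noncomputable def E (c : Fin s → ℤ) (x : Fin s → ℝ) : ℝ := Real.exp (pr c x)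

lemma z_pos (v : Fin s → ℤ) (x : Fin s → ℝ) : 0 < z v x := Real.exp_pos _
lemma z_ne (v : Fin s → ℤ) (x : Fin s → ℝ) : z v x ≠ 0 := (z_pos v x).ne'

lemma z_zpow (v : Fin s → ℤ) (x : Fin s → ℝ) (t : ℤ) : z v x ^ t = z (t • v) x := by
  rw [z, z, pr_zsmul]
  rcases le_or_gt 0 t with ht | ht
  · lift t to ℕ using ht
    rw [zpow_natCast, ← Real.exp_nat_mul]; push_cast; ring_nf
  · obtain ⟨m, rfl⟩ : ∃ m : ℕ, t = -(m : ℤ) := ⟨t.natAbs, by omega⟩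
    rw [zpow_neg, zpow_natCast, ← Real.exp_nat_mul, ← Real.exp_neg]; push_cast; ring_nf

lemma z_pow (v : Fin s → ℤ) (x : Fin s → ℝ) (n : ℕ) : z v x ^ n = z ((n : ℤ) • v) x := by
  rw [← zpow_natCast, z_zpow]

lemma z_eq_E (v : Fin s → ℤ) (x : Fin s → ℝ) : z v x = E (-v) x := by
  rw [z, E]
  congr 1
  rw [pr, pr, ← Finset.sum_neg_distrib]
  exact Finset.sum_congr rfl fun j _ => by
    rw [Pi.neg_apply]; push_cast; ring

lemma E_mul (c c' : Fin s → ℤ) (x : Fin s → ℝ) : E c x * E c' x = E (c + c') x := by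
  rw [E, E, E, ← Real.exp_add, pr_add]

lemma E_zero (x : Fin s → ℝ) : E (0 : Fin s → ℤ) x = 1 := by simp [E, pr_zero]

/-- `D v x = 1 - e^{-⟨v,x⟩}` -/
noncomputable def D (v : Fin s → ℤ) (x : Fin s → ℝ) : ℝ := 1 - z v x


variable (X : Fin N → (Fin s → ℤ))

/-- the positivity region -/
def Pos (x : Fin s → ℝ) : Prop := ∀ k, 0 < pr (X k) x

/-- the region as a subtype -/
def PT := {x : Fin s → ℝ // Pos X x}

/-- `c` is an integer combination of the `X k` -/
def inSpanX (c : Fin s → ℤ) : Prop := ∃ d : Fin N → ℤ, c = ∑ k, d k • X k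

lemma inSpanX_add {c c' : Fin s → ℤ} (h : inSpanX X c) (h' : inSpanX X c') :
    inSpanX X (c + c') := by
  obtain ⟨d, rfl⟩ := h; obtain ⟨d', rfl⟩ := h'
  refine ⟨d + d', ?_⟩
  rw [← Finset.sum_add_distrib]
  exact Finset.sum_congr rfl fun k _ => by rw [Pi.add_apply, add_smul]

lemma inSpanX_zero : inSpanX X (0 : Fin s → ℤ) := ⟨0, by simp⟩

lemma inSpanX_zsmul_single (t : ℤ) (n : ℤ) (k : Fin N) : inSpanX X (t • (n • X k)) := by
  classical
  refine ⟨fun k' => if k' = k then t * n else 0, ?_⟩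
  rw [Finset.sum_eq_single k]
  · show t • n • X k = (if k = k then t * n else 0) • X k
    rw [if_pos rfl, smul_smul]
  · intro b _ hb
    show (if b = k then t * n else 0) • X b = 0
    rw [if_neg hb, zero_smul]
  · intro h; exact absurd (Finset.mem_univ k) h

/-- basic functions on the region -/
def Basic : Set (PT X → ℝ) :=
  {F | ∃ (A : Fin s → Fin s → ℤ) (h : Fin s → ℕ) (c : Fin s → ℤ),
    LinearIndependent ℝ (fun i => (fun j => (A i j : ℝ))) ∧
    (∀ i, ∃ (n : ℕ) (k : Fin N), 0 < n ∧ A i = (n : ℤ) • X k) ∧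
    (∑ i, h i) = N ∧ inSpanX X c ∧
    ∀ p : PT X, F p = E c p.1 * ∏ i, (D (A i) p.1 ^ h i)⁻¹}

/-- `F` has a good expansion on the region -/
def Good (F : (Fin s → ℝ) → ℝ) : Prop :=
  (fun p : PT X => F p.1) ∈ Submodule.span ℝ (Basic X)

lemma Good.congr {F G : (Fin s → ℝ) → ℝ} (h : Good X F)
    (hFG : ∀ x, Pos X x → F x = G x) : Good X G := by
  have : (fun p : PT X => G p.1) = (fun p : PT X => F p.1) := by
    funext p; exact (hFG p.1 p.2).symm
  rw [Good, this]; exact h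

lemma Good.sum {ι : Type*} (T : Finset ι) (F : ι → (Fin s → ℝ) → ℝ)
    (h : ∀ l ∈ T, Good X (F l)) : Good X (fun x => ∑ l ∈ T, F l x) := by
  have : (fun p : PT X => ∑ l ∈ T, F l p.1) = ∑ l ∈ T, (fun p : PT X => F l p.1) := by
    funext p; simp
  rw [Good, this]
  exact Submodule.sum_mem _ fun l hl => h l hl

lemma Good.smul {F : (Fin s → ℝ) → ℝ} (r : ℝ) (h : Good X F) :
    Good X (fun x => r * F x) := by
  have : (fun p : PT X => r * F p.1) = r • (fun p : PT X => F p.1) := by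
    funext p; simp
  rw [Good, this]
  exact Submodule.smul_mem _ _ h

lemma Good.mul_E {F : (Fin s → ℝ) → ℝ} (c : Fin s → ℤ) (hc : inSpanX X c)
    (h : Good X F) : Good X (fun x => E c x * F x) := by
  have hmap : ∀ b ∈ Basic X, (fun p : PT X => E c p.1 * b p) ∈ Basic X := by
    rintro b ⟨A, hh, c', hli, hmul, hsum, hc', hb⟩
    refine ⟨A, hh, c + c', hli, hmul, hsum, inSpanX_add X hc hc', fun p => ?_⟩
    show E c p.1 * b p = _
    rw [hb p, ← mul_assoc, E_mul]
  -- multiplication by E c is a linear map on functions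
  let L : (PT X → ℝ) →ₗ[ℝ] (PT X → ℝ) :=
    { toFun := fun G => fun p => E c p.1 * G p
      map_add' := fun G₁ G₂ => by funext p; simp [mul_add]
      map_smul' := fun r G => by funext p; simp; ring }
  have : (fun p : PT X => E c p.1 * F p.1) = L (fun p : PT X => F p.1) := rfl
  rw [Good, this]
  have := Submodule.apply_mem_span_image_of_mem_span (s := Basic X) L h
  refine Submodule.span_le.2 ?_ this
  rintro g ⟨b, hb, rfl⟩
  exact Submodule.subset_span (hmap b hb)

/-- monomial exponential functions with exponent in the integer span of `X` -/
def Mon : Set ((Fin s → ℝ) → ℝ) :=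
  {g | ∃ c : Fin s → ℤ, inSpanX X c ∧ g = fun x => E c x}

/-- the algebra of exponential sums -/
def EF : Subalgebra ℝ ((Fin s → ℝ) → ℝ) := Algebra.adjoin ℝ (Mon X)

lemma Good.add {F G : (Fin s → ℝ) → ℝ} (hF : Good X F) (hG : Good X G) :
    Good X (fun x => F x + G x) := by
  have : (fun p : PT X => F p.1 + G p.1)
      = (fun p : PT X => F p.1) + (fun p : PT X => G p.1) := rfl
  rw [Good, this]
  exact Submodule.add_mem _ hF hG

lemma mul_EF_good {g : (Fin s → ℝ) → ℝ} (hg : g ∈ EF X) :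
    ∀ F : (Fin s → ℝ) → ℝ, Good X F → Good X (fun x => g x * F x) := by
  induction hg using Algebra.adjoin_induction with
  | mem g hgm =>
    intro F hF
    obtain ⟨c, hc, rfl⟩ := hgm
    exact hF.mul_E X c hc
  | algebraMap r =>
    intro F hF
    exact (hF.smul X r).congr X (fun x _ => by simp)
  | add g₁ g₂ h₁ h₂ ih₁ ih₂ =>
    intro F hF
    exact ((ih₁ F hF).add X (ih₂ F hF)).congr X fun x _ => by simp [Pi.add_apply]; ring
  | mul g₁ g₂ h₁ h₂ ih₁ ih₂ =>
    intro F hF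
    exact (ih₁ _ (ih₂ F hF)).congr X fun x _ => by simp [Pi.mul_apply]; ring

lemma Good.mul_EF {g F : (Fin s → ℝ) → ℝ} (hg : g ∈ EF X) (hF : Good X F) :
    Good X (fun x => g x * F x) := mul_EF_good X hg F hF


/-- `v` is an integer multiple of some `X k` -/
def IsMul (v : Fin s → ℤ) : Prop := ∃ (t : ℤ) (k : Fin N), v = t • X k

lemma inSpanX_zsmul_mul {v : Fin s → ℤ} (hv : IsMul X v) (t : ℤ) :
    inSpanX X (t • v) := by
  obtain ⟨n, k, rfl⟩ := hv
  exact inSpanX_zsmul_single X t n k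

lemma mem_EF_E {c : Fin s → ℤ} (hc : inSpanX X c) : (fun x => E c x) ∈ EF X :=
  Algebra.subset_adjoin ⟨c, hc, rfl⟩

lemma mem_EF_z_zpow {v : Fin s → ℤ} (hv : IsMul X v) (t : ℤ) :
    (fun x => z v x ^ t) ∈ EF X := by
  have : (fun x => z v x ^ t) = (fun x => E ((-t) • v) x) := by
    funext x; rw [z_zpow, z_eq_E, neg_smul]
  rw [this]
  exact mem_EF_E X (inSpanX_zsmul_mul X hv (-t))

lemma mem_EF_z_pow {v : Fin s → ℤ} (hv : IsMul X v) (n : ℕ) :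
    (fun x => z v x ^ n) ∈ EF X := by
  have : (fun x => z v x ^ n) = (fun x => z v x ^ (n : ℤ)) := by
    funext x; rw [zpow_natCast]
  rw [this]; exact mem_EF_z_zpow X hv n

lemma mem_EF_geom {v : Fin s → ℤ} (hv : IsMul X v) (n : ℕ) :
    (fun x => ∑ a ∈ Finset.range n, z v x ^ a) ∈ EF X := by
  have : (fun x => ∑ a ∈ Finset.range n, z v x ^ a)
      = ∑ a ∈ Finset.range n, (fun x => z v x ^ a) := by
    funext x; simp
  rw [this]
  exact sum_mem fun a _ => mem_EF_z_pow X hv a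

/-- geometric-type cofactor for `1 - w^t` -/
noncomputable def Qg (w : ℝ) (t : ℤ) : ℝ :=
  if 0 ≤ t then ∑ a ∈ Finset.range t.toNat, w ^ a
  else -(w ^ t * ∑ a ∈ Finset.range (-t).toNat, w ^ a)

lemma one_sub_geom (w : ℝ) (n : ℕ) :
    1 - w ^ n = (1 - w) * ∑ a ∈ Finset.range n, w ^ a := by
  linear_combination geom_sum_mul w n

lemma one_sub_zpow (w : ℝ) (hw : w ≠ 0) (t : ℤ) : 1 - w ^ t = (1 - w) * Qg w t := by
  rcases le_or_gt 0 t with ht | ht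
  · rw [Qg, if_pos ht, ← one_sub_geom]
    congr 1
    rw [← zpow_natCast, Int.toNat_of_nonneg ht]
  · rw [Qg, if_neg (not_le.2 ht)]
    have hm : w ^ t * w ^ ((-t).toNat : ℤ) = 1 := by
      rw [← zpow_add₀ hw]
      rw [Int.toNat_of_nonneg (by omega)]
      simp
    have h2 : w ^ ((-t).toNat : ℤ) = w ^ ((-t).toNat) := zpow_natCast w _
    rw [h2] at hm
    linear_combination (-(w ^ t)) * one_sub_geom w (-t).toNat - hm

lemma mem_EF_Qg {v : Fin s → ℤ} (hv : IsMul X v) (t : ℤ) :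
    (fun x => Qg (z v x) t) ∈ EF X := by
  unfold Qg
  split_ifs with ht
  · exact mem_EF_geom X hv t.toNat
  · refine neg_mem (mul_mem (mem_EF_z_zpow X hv t) (mem_EF_geom X hv (-t).toNat))

/-- the telescoping identity -/
lemma telescope {α : Type*} [LinearOrder α] (T : Finset α) (t : α → ℝ) :
    1 - ∏ l ∈ T, t l
      = ∑ l ∈ T, (∏ l' ∈ T.filter (· < l), t l') * (1 - t l) := by
  classical
  induction T using Finset.induction_on_max with
  | empty => simp
  | insert a T ha ih =>
    have haT : a ∉ T := fun h => lt_irrefl a (ha a h)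
    rw [Finset.prod_insert haT, Finset.sum_insert haT]
    have h1 : (insert a T).filter (· < a) = T := by
      rw [Finset.filter_insert, if_neg (lt_irrefl a), Finset.filter_true_of_mem ha]
    have h2 : ∀ l ∈ T, (insert a T).filter (· < l) = T.filter (· < l) := by
      intro l hl
      rw [Finset.filter_insert, if_neg (fun h => lt_asymm h (ha l hl))]
    rw [h1, Finset.sum_congr rfl (fun l hl => by rw [h2 l hl])]
    rw [← ih]
    ring


/-- vector of slot `k` -/
def vk (nb : Fin N → ℕ) (k : Fin N) : Fin s → ℤ := (nb k : ℤ) • X k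

/-- the product of the state -/
noncomputable def Fprod (nb h : Fin N → ℕ) (x : Fin s → ℝ) : ℝ :=
  ∏ k, (D (vk X nb k) x ^ h k)⁻¹

lemma vk_isMul (nb : Fin N → ℕ) (k : Fin N) : IsMul X (vk X nb k) := ⟨nb k, k, rfl⟩

lemma pr_smul_pos {x : Fin s → ℝ} (hx : Pos X x) {t : ℤ} (ht : 0 < t) (k : Fin N) :
    0 < pr (t • X k) x := by
  rw [pr_zsmul]
  exact mul_pos (by exact_mod_cast ht) (hx k)

lemma z_lt_one_of_pos {v : Fin s → ℤ} {x : Fin s → ℝ} (hv : 0 < pr v x) : z v x < 1 :=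
  Real.exp_lt_one_iff.2 (by linarith)

lemma D_pos_of_pos {v : Fin s → ℤ} {x : Fin s → ℝ} (hv : 0 < pr v x) : 0 < D v x := by
  have := z_lt_one_of_pos hv
  rw [D]; linarith

lemma pr_vk_pos {x : Fin s → ℝ} (hx : Pos X x) {nb : Fin N → ℕ} (hnb : ∀ k, 1 ≤ nb k)
    (k : Fin N) : 0 < pr (vk X nb k) x :=
  pr_smul_pos X hx (by exact_mod_cast hnb k) k

section Step

variable (nb h : Fin N → ℕ) (e : Fin N → ℤ) (q : Fin N)

/-- indices of the relation other than `q` -/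
def Tset : Finset (Fin N) := (Finset.univ.erase q).filter (fun k => e k ≠ 0)

/-- the exponential prefactor of the branch `l` -/
noncomputable def gfun (l : Fin N) (x : Fin s → ℝ) : ℝ :=
  (∏ l' ∈ (Tset e q).filter (· < l), z (vk X nb l') x ^ (e l')) *
    Qg (z (vk X nb l) x) (e l) * Qg (z (vk X nb q) x) (-(e q)) ^ (h q)

lemma gfun_mem_EF (l : Fin N) : (fun x => gfun X nb h e q l x) ∈ EF X := by
  have h1 : (fun x => ∏ l' ∈ (Tset e q).filter (· < l), z (vk X nb l') x ^ (e l'))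
      = ∏ l' ∈ (Tset e q).filter (· < l), (fun x => z (vk X nb l') x ^ (e l')) := by
    funext x; simp
  have hm1 : (fun x => ∏ l' ∈ (Tset e q).filter (· < l), z (vk X nb l') x ^ (e l')) ∈ EF X := by
    rw [h1]
    exact prod_mem fun l' _ => mem_EF_z_zpow X (vk_isMul X nb l') (e l')
  exact mul_mem (mul_mem hm1 (mem_EF_Qg X (vk_isMul X nb l) (e l)))
    (pow_mem (mem_EF_Qg X (vk_isMul X nb q) (-(e q))) (h q))

lemma key_scalar (P QL GQ W a b : ℝ) (n m : ℕ) (ha : a ≠ 0) (hb : b ≠ 0) (hG : GQ ≠ 0) :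
    P * QL * GQ ^ n * (((b * GQ) ^ (n + 1))⁻¹ * ((a ^ m)⁻¹ * W)) * (b * GQ)
      = P * (a * QL) * ((b ^ n)⁻¹ * ((a ^ (m + 1))⁻¹ * W)) := by
  rw [mul_pow, pow_succ, pow_succ]
  field_simp
  ring

lemma step_key
    (hnb : ∀ k, 1 ≤ nb k)
    (heq : e q < 0)
    (hsupp : ∀ k, e k ≠ 0 → 1 ≤ h k)
    (hrel : ∑ k, e k • vk X nb k = 0)
    {x : Fin s → ℝ} (hx : Pos X x) :
    Fprod X nb h x = ∑ l ∈ Tset e q,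
      gfun X nb h e q l x *
        Fprod X (Function.update nb q ((-(e q)).toNat * nb q))
          (Function.update (Function.update h l (h l - 1)) q (h q + 1)) x := by
  classical
  set c0 : ℤ := -(e q) with hc0def
  have hc0 : 0 < c0 := by omega
  set nb' : Fin N → ℕ := Function.update nb q (c0.toNat * nb q) with hnb'def
  -- the new vector at slot q
  have hvq' : vk X nb' q = c0 • vk X nb q := by
    show ((Function.update nb q (c0.toNat * nb q) q : ℕ) : ℤ) • X q = _
    rw [Function.update_self, vk, smul_smul]
    congr 1
    push_cast [Int.toNat_of_nonneg hc0.le]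
    ring
  -- the relation restricted to T
  have hrelT : ∑ l ∈ Tset e q, e l • vk X nb l = c0 • vk X nb q := by
    have h1 : ∑ k, e k • vk X nb k
        = e q • vk X nb q + ∑ k ∈ Finset.univ.erase q, e k • vk X nb k :=
      (Finset.add_sum_erase _ _ (Finset.mem_univ q)).symm
    have h2 : ∑ k ∈ (Finset.univ.erase q).filter (fun k => e k ≠ 0), e k • vk X nb k
        = ∑ k ∈ Finset.univ.erase q, e k • vk X nb k := by
      refine Finset.sum_filter_of_ne ?_
      intro k _ hk
      intro hek
      exact hk (by rw [hek, zero_smul])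
    rw [Tset, h2]
    have h3 : e q • vk X nb q + ∑ k ∈ Finset.univ.erase q, e k • vk X nb k = 0 := by
      rw [← h1]; exact hrel
    have := eq_neg_of_add_eq_zero_right h3
    rw [this, ← neg_smul, hc0def]
  -- positivity facts
  have hDk : ∀ k, D (vk X nb k) x ≠ 0 :=
    fun k => (D_pos_of_pos (pr_vk_pos X hx hnb k)).ne'
  have hprC : 0 < pr (c0 • vk X nb q) x := by
    rw [vk, smul_smul]
    refine pr_smul_pos X hx ?_ q
    exact mul_pos hc0 (by exact_mod_cast hnb q)
  have hDZ : D (c0 • vk X nb q) x ≠ 0 := (D_pos_of_pos hprC).ne'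
  -- the product identity from the relation
  have hprod : ∏ l ∈ Tset e q, z (vk X nb l) x ^ (e l) = z (c0 • vk X nb q) x := by
    have hz : ∀ l, z (vk X nb l) x ^ (e l) = Real.exp (-(pr (e l • vk X nb l) x)) := by
      intro l; rw [z_zpow]; rfl
    rw [Finset.prod_congr rfl (fun l _ => hz l), ← Real.exp_sum, z]
    congr 1
    rw [← hrelT, pr_sum]
    simp
  -- telescoping
  have htel : D (c0 • vk X nb q) x = ∑ l ∈ Tset e q,
      (∏ l' ∈ (Tset e q).filter (· < l), z (vk X nb l') x ^ (e l')) *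
        (1 - z (vk X nb l) x ^ (e l)) := by
    rw [D, ← hprod]
    exact telescope (Tset e q) _
  -- per-branch key identity
  have hkey : ∀ l ∈ Tset e q,
      gfun X nb h e q l x *
        Fprod X nb' (Function.update (Function.update h l (h l - 1)) q (h q + 1)) x *
        D (c0 • vk X nb q) x
      = (∏ l' ∈ (Tset e q).filter (· < l), z (vk X nb l') x ^ (e l')) *
          (1 - z (vk X nb l) x ^ (e l)) * Fprod X nb h x := by
    intro l hl
    have hl' := hl
    rw [Tset, Finset.mem_filter, Finset.mem_erase] at hl'
    obtain ⟨⟨hlq, -⟩, hel⟩ := hl'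
    obtain ⟨m, hm⟩ : ∃ m, h l = m + 1 := ⟨h l - 1, by have := hsupp l hel; omega⟩
    have hsplit1 : Fprod X nb h x
        = (D (vk X nb q) x ^ h q)⁻¹ * ((D (vk X nb l) x ^ h l)⁻¹ *
            ∏ k ∈ (Finset.univ.erase q).erase l, (D (vk X nb k) x ^ h k)⁻¹) := by
      rw [Fprod, ← Finset.mul_prod_erase _ _ (Finset.mem_univ q),
        ← Finset.mul_prod_erase _ _ (Finset.mem_erase.2 ⟨hlq, Finset.mem_univ l⟩)]
    have hsplit2 : Fprod X nb' (Function.update (Function.update h l (h l - 1)) q (h q + 1)) x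
        = (D (c0 • vk X nb q) x ^ (h q + 1))⁻¹ * ((D (vk X nb l) x ^ m)⁻¹ *
            ∏ k ∈ (Finset.univ.erase q).erase l, (D (vk X nb k) x ^ h k)⁻¹) := by
      rw [Fprod, ← Finset.mul_prod_erase _ _ (Finset.mem_univ q),
        ← Finset.mul_prod_erase _ _ (Finset.mem_erase.2 ⟨hlq, Finset.mem_univ l⟩)]
      congr 1
      · rw [hvq', Function.update_self]
      congr 1
      · rw [Function.update_of_ne hlq, Function.update_self]
        have hnbl : nb' l = nb l := Function.update_of_ne hlq _ _
        rw [hm]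
        simp only [Nat.add_sub_cancel]
        congr 2
        rw [vk, vk, hnbl]
      · refine Finset.prod_congr rfl ?_
        intro k hk
        rw [Finset.mem_erase, Finset.mem_erase] at hk
        obtain ⟨hkl, hkq, -⟩ := hk
        rw [Function.update_of_ne hkq, Function.update_of_ne hkl]
        congr 2
        rw [vk, vk, hnb'def, Function.update_of_ne hkq]
    have hQl : 1 - z (vk X nb l) x ^ (e l)
        = D (vk X nb l) x * Qg (z (vk X nb l) x) (e l) :=
      one_sub_zpow _ (z_ne _ _) _
    have hQq : D (c0 • vk X nb q) x = D (vk X nb q) x * Qg (z (vk X nb q) x) c0 := by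
      rw [D, D, ← z_zpow]
      exact one_sub_zpow _ (z_ne _ _) _
    have ha : D (vk X nb l) x ≠ 0 := hDk l
    have hb : D (vk X nb q) x ≠ 0 := hDk q
    have hG : Qg (z (vk X nb q) x) c0 ≠ 0 := by
      intro h0
      rw [hQq, h0, mul_zero] at hDZ
      exact hDZ rfl
    rw [hsplit1, hsplit2, gfun, ← hc0def, hQl, hQq, hm]
    exact key_scalar _ _ _ _ _ _ (h q) m ha hb hG
  -- assembly
  have hsum : (∑ l ∈ Tset e q, gfun X nb h e q l x *
        Fprod X nb' (Function.update (Function.update h l (h l - 1)) q (h q + 1)) x) *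
        D (c0 • vk X nb q) x
      = Fprod X nb h x * D (c0 • vk X nb q) x := by
    rw [Finset.sum_mul, Finset.sum_congr rfl hkey, ← Finset.sum_mul, ← htel]
    ring
  exact (mul_right_cancel₀ hDZ hsum).symm

end Step

section Bookkeeping

lemma update_sum_weighted (h w : Fin N → ℕ) {l q : Fin N} (hlq : l ≠ q) (hl : 1 ≤ h l) :
    ∑ k, (Function.update (Function.update h l (h l - 1)) q (h q + 1)) k * w k + w l
      = ∑ k, h k * w k + w q := by
  classical
  obtain ⟨m, hm⟩ : ∃ m, h l = m + 1 := ⟨h l - 1, by omega⟩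
  set h2 := Function.update (Function.update h l (h l - 1)) q (h q + 1) with hh2
  have split : ∀ g : Fin N → ℕ, ∑ k, g k * w k
      = g q * w q + (g l * w l + ∑ k ∈ (Finset.univ.erase q).erase l, g k * w k) := by
    intro g
    rw [← Finset.add_sum_erase _ _ (Finset.mem_univ q),
      ← Finset.add_sum_erase _ _ (Finset.mem_erase.2 ⟨hlq, Finset.mem_univ l⟩)]
  have hrest : ∑ k ∈ (Finset.univ.erase q).erase l, h2 k * w k
      = ∑ k ∈ (Finset.univ.erase q).erase l, h k * w k := by
    refine Finset.sum_congr rfl ?_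
    intro k hk
    rw [Finset.mem_erase, Finset.mem_erase] at hk
    rw [hh2, Function.update_of_ne hk.2.1, Function.update_of_ne hk.1]
  have h2q : h2 q = h q + 1 := Function.update_self _ _ _
  have h2l : h2 l = m := by
    rw [hh2, Function.update_of_ne hlq, Function.update_self, hm]
    omega
  rw [split h2, split h, hrest, h2q, h2l, hm]
  ring

lemma update_sum_eq (h : Fin N → ℕ) {l q : Fin N} (hlq : l ≠ q) (hl : 1 ≤ h l) :
    ∑ k, (Function.update (Function.update h l (h l - 1)) q (h q + 1)) k = ∑ k, h k := by
  have := update_sum_weighted (N := N) h (fun _ => 1) hlq hl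
  simp only [mul_one] at this
  omega

/-- the termination measure -/
def meas (h : Fin N → ℕ) : ℕ := ∑ k, h k * (k.1 + 1)

lemma update_meas (h : Fin N → ℕ) {l q : Fin N} (hlq : l ≠ q) (hl : 1 ≤ h l)
    (hlt : l < q) :
    meas h + 1 ≤ meas (Function.update (Function.update h l (h l - 1)) q (h q + 1)) := by
  have := update_sum_weighted (N := N) h (fun k => k.1 + 1) hlq hl
  have hlt' : l.1 < q.1 := hlt
  simp only [meas] at *
  omega

lemma meas_le (h : Fin N → ℕ) (hsum : ∑ k, h k = N) : meas h ≤ N * N := by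
  calc meas h ≤ ∑ k, h k * N := by
        refine Finset.sum_le_sum ?_
        intro k _
        exact Nat.mul_le_mul_left _ (by omega)
    _ = N * N := by rw [← Finset.sum_mul, hsum]

lemma base_support (h : Fin N → ℕ) (hsum : ∑ k, h k = N) (hμ : N * N ≤ meas h) :
    ∀ k, h k ≠ 0 → k.1 + 1 = N := by
  intro k hk
  by_contra hkN
  have hkN' : k.1 + 1 < N := by have := k.2; omega
  have : meas h < ∑ j, h j * N := by
    refine Finset.sum_lt_sum (fun j _ => Nat.mul_le_mul_left _ (by have := j.2; omega)) ?_
    exact ⟨k, Finset.mem_univ k, mul_lt_mul_of_pos_left hkN' (Nat.pos_of_ne_zero hk)⟩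
  rw [← Finset.sum_mul, hsum] at this
  omega

lemma li_of_subsingleton {ι : Type*} [Subsingleton ι] (v : ι → (Fin s → ℚ))
    (hv : ∀ i, v i ≠ 0) : LinearIndependent ℚ v := by
  cases isEmpty_or_nonempty ι with
  | inl hE => exact linearIndependent_empty_type
  | inr hN =>
    have : Unique ι := uniqueOfSubsingleton (Classical.arbitrary ι)
    exact linearIndependent_unique_iff.2 (hv default)

/-- the rational realization of a vector -/
def rQ (v : Fin s → ℤ) : Fin s → ℚ := fun j => (v j : ℚ)

lemma rQ_ne_zero {v : Fin s → ℤ} (hv : v ≠ 0) : rQ v ≠ 0 := by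
  intro h0
  apply hv
  funext j
  have := congrFun h0 j
  simpa [rQ] using this

lemma vk_ne_zero (hne : ∀ k, X k ≠ 0) {nb : Fin N → ℕ} (hnb : ∀ k, 1 ≤ nb k) (k : Fin N) :
    vk X nb k ≠ 0 := by
  intro h0
  apply hne k
  funext j
  have := congrFun h0 j
  have hk := hnb k
  simp only [vk, Pi.smul_apply, smul_eq_mul] at this
  have : (nb k : ℤ) ≠ 0 := by exact_mod_cast Nat.one_le_iff_ne_zero.1 hk
  · exact by
      have h2 := congrFun h0 j
      simp only [vk, Pi.smul_apply, smul_eq_mul] at h2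
      exact by
        rcases mul_eq_zero.1 h2 with h | h
        · exact absurd h this
        · exact h

/-- ℚ-independence of square integer systems gives ℝ-independence -/
lemma qindep_to_rindep (A : Fin s → (Fin s → ℤ))
    (hA : LinearIndependent ℚ (fun i => rQ (A i))) :
    LinearIndependent ℝ (fun i => (fun j => (A i j : ℝ))) := by
  classical
  let MQ : Matrix (Fin s) (Fin s) ℚ := Matrix.of (fun i j => (A i j : ℚ))
  have h1 : LinearIndependent ℚ (fun i => MQ i) := hA
  have h2 : IsUnit MQ := Matrix.linearIndependent_rows_iff_isUnit.1 h1
  have h3 : MQ.det ≠ 0 := by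
    intro h0
    have := (Matrix.isUnit_iff_isUnit_det MQ).1 h2
    rw [h0] at this
    exact (by simpa using this : False)
  let MR : Matrix (Fin s) (Fin s) ℝ := MQ.map (Rat.castHom ℝ)
  have h4 : MR.det ≠ 0 := by
    have hdet : MR.det = ((MQ.det : ℚ) : ℝ) := ((Rat.castHom ℝ).map_det MQ).symm
    rw [hdet]
    exact_mod_cast h3
  have h5 : IsUnit MR := (Matrix.isUnit_iff_isUnit_det MR).2 (isUnit_iff_ne_zero.2 h4)
  have h6 : LinearIndependent ℝ (fun i => MR i) :=
    Matrix.linearIndependent_rows_iff_isUnit.2 h5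
  have : (fun i => (fun j => (A i j : ℝ))) = (fun i => MR i) := by
    funext i j
    simp [MR, MQ, Matrix.map_apply]
  rw [this]
  exact h6

end Bookkeeping

section Extension

lemma exists_new_vector
    (hspan : Submodule.span ℝ (Set.range fun k => (fun j => (X k j : ℝ))) = ⊤)
    {m : ℕ} (hm : m < s) (w : Fin m → (Fin s → ℤ)) :
    ∃ k : Fin N, rQ (X k) ∉ Submodule.span ℚ (Set.range fun i => rQ (w i)) := by
  by_contra hall
  push_neg at hall
  have hR : ∀ k : Fin N, (fun j => (X k j : ℝ))
      ∈ Submodule.span ℝ (Set.range fun i => (fun j => (w i j : ℝ))) := by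
    intro k
    obtain ⟨c, hc⟩ := (Submodule.mem_span_range_iff_exists_fun ℚ).1 (hall k)
    refine (Submodule.mem_span_range_iff_exists_fun ℝ).2 ⟨fun i => (c i : ℝ), ?_⟩
    funext j
    have hj := congrFun hc j
    simp only [rQ, Finset.sum_apply, Pi.smul_apply, smul_eq_mul] at hj ⊢
    have : ((∑ i, c i * (w i j : ℚ) : ℚ) : ℝ) = ((X k j : ℚ) : ℝ) := by
      exact_mod_cast congrArg (fun t : ℚ => (t : ℝ)) hj
    push_cast at this
    convert this using 2 <;> norm_cast
  have htop : Submodule.span ℝ (Set.range fun i => (fun j => (w i j : ℝ))) = ⊤ := by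
    rw [eq_top_iff, ← hspan, Submodule.span_le]
    rintro y ⟨k, rfl⟩
    exact hR k
  have h1 : Module.finrank ℝ (Fin s → ℝ) ≤ m := by
    have := finrank_le_of_span_eq_top htop
    simpa using this
  rw [Module.finrank_fintype_fun_eq_card] at h1
  simp at h1
  omega

lemma ext_basis
    (hspan : Submodule.span ℝ (Set.range fun k => (fun j => (X k j : ℝ))) = ⊤) :
    ∀ (d m : ℕ), m + d = s → ∀ (w : Fin m → (Fin s → ℤ)) (H : Fin m → ℕ),
    LinearIndependent ℚ (fun i => rQ (w i)) →
    (∀ i, ∃ (n : ℕ) (k : Fin N), 0 < n ∧ w i = (n : ℤ) • X k) →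
    ∃ (A : Fin s → (Fin s → ℤ)) (H' : Fin s → ℕ),
      LinearIndependent ℚ (fun i => rQ (A i)) ∧
      (∀ i, ∃ (n : ℕ) (k : Fin N), 0 < n ∧ A i = (n : ℤ) • X k) ∧
      (∑ i, H' i = ∑ i, H i) ∧
      ∀ x : Fin s → ℝ, ∏ i, (D (w i) x ^ H i)⁻¹ = ∏ i, (D (A i) x ^ H' i)⁻¹ := by
  intro d
  induction d with
  | zero =>
    intro m hm w H hli hmul
    have hms : m = s := by omega
    subst hms
    exact ⟨w, H, hli, hmul, rfl, fun x => rfl⟩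
  | succ d ih =>
    intro m hm w H hli hmul
    have hmlt : m < s := by omega
    obtain ⟨k0, hk0⟩ := exists_new_vector X hspan hmlt w
    have hXne : (1 : ℕ) ≤ 1 := le_refl 1
    set w' : Fin (m + 1) → (Fin s → ℤ) := Fin.snoc w (X k0) with hw'
    set H' : Fin (m + 1) → ℕ := Fin.snoc H 0 with hH'
    have hli' : LinearIndependent ℚ (fun i => rQ (w' i)) := by
      have : (fun i => rQ (w' i)) = Fin.snoc (fun i => rQ (w i)) (rQ (X k0)) := by
        funext i
        refine Fin.lastCases ?_ ?_ i
        · rw [hw']; simp [Fin.snoc_last]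
        · intro j; rw [hw']; simp [Fin.snoc_castSucc]
      rw [this]
      exact linearIndependent_fin_snoc.2 ⟨hli, hk0⟩
    have hmul' : ∀ i, ∃ (n : ℕ) (k : Fin N), 0 < n ∧ w' i = (n : ℤ) • X k := by
      intro i
      refine Fin.lastCases ?_ ?_ i
      · exact ⟨1, k0, Nat.one_pos, by rw [hw']; simp [Fin.snoc_last]⟩
      · intro j
        obtain ⟨n, k, hn, hw⟩ := hmul j
        exact ⟨n, k, hn, by rw [hw']; simpa [Fin.snoc_castSucc] using hw⟩
    obtain ⟨A, H'', hA1, hA2, hA3, hA4⟩ := ih (m + 1) (by omega) w' H' hli' hmul'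
    refine ⟨A, H'', hA1, hA2, ?_, ?_⟩
    · rw [hA3, hH', Fin.sum_univ_castSucc]
      simp [Fin.snoc_last, Fin.snoc_castSucc]
    · intro x
      rw [← hA4 x, Fin.prod_univ_castSucc]
      simp [hw', hH', Fin.snoc_last, Fin.snoc_castSucc]

end Extension

section Extract

lemma extract_relation (nb h : Fin N → ℕ)
    (hdep : ¬ LinearIndependent ℚ
      (fun k : {k : Fin N // k ∈ Finset.univ.filter (fun k => h k ≠ 0)} => rQ (vk X nb k.1))) :
    ∃ (e : Fin N → ℤ) (q : Fin N), e q < 0 ∧ (∀ k, e k ≠ 0 → 1 ≤ h k) ∧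
      (∀ k, e k ≠ 0 → k ≤ q) ∧ ∑ k, e k • vk X nb k = 0 := by
  classical
  set Sf := Finset.univ.filter (fun k : Fin N => h k ≠ 0) with hSf
  obtain ⟨g, hg0, i0, hi0⟩ := Fintype.not_linearIndependent_iff.1 hdep
  set g' : Fin N → ℚ := fun k => if hk : k ∈ Sf then g ⟨k, hk⟩ else 0 with hg'
  have hg'mem : ∀ k, g' k ≠ 0 → h k ≠ 0 := by
    intro k hk
    by_contra hhk
    apply hk
    rw [hg']
    have : k ∉ Sf := by rw [hSf]; simp [hhk]
    simp [dif_neg this]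
  have h1 : ∑ k ∈ Sf, g' k • rQ (vk X nb k) = 0 := by
    rw [← Finset.sum_coe_sort Sf (fun k => g' k • rQ (vk X nb k))]
    calc ∑ i : ↥Sf, g' i.1 • rQ (vk X nb i.1)
        = ∑ i : ↥Sf, g i • rQ (vk X nb i.1) := by
          refine Finset.sum_congr rfl ?_
          intro i _
          congr 1
          rw [hg']
          simp [dif_pos i.2]
      _ = 0 := hg0
  have hg'sum : ∑ k, g' k • rQ (vk X nb k) = 0 := by
    have hz : ∀ k ∈ Finset.univ, k ∉ Sf → g' k • rQ (vk X nb k) = 0 := by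
      intro k _ hk
      rw [hg']
      simp [dif_neg hk]
    rw [← Finset.sum_subset (Finset.subset_univ Sf) hz]
    exact h1
  -- clear denominators
  set dden : ℕ := ∏ k, (g' k).den with hdd
  have hdpos : 0 < dden := Finset.prod_pos (fun k _ => (g' k).pos)
  have hint : ∀ k, ∃ t : ℤ, (t : ℚ) = g' k * dden := by
    intro k
    obtain ⟨c, hc⟩ := Finset.dvd_prod_of_mem (fun k => (g' k).den) (Finset.mem_univ k)
    refine ⟨(g' k).num * c, ?_⟩
    have hden : ((g' k).den : ℚ) ≠ 0 := by exact_mod_cast (g' k).den_ne_zero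
    have hcast : (dden : ℚ) = ((g' k).den : ℚ) * (c : ℚ) := by
      rw [hdd]; exact_mod_cast congrArg (Nat.cast : ℕ → ℚ) hc
    have hnum : ((g' k).num : ℚ) = g' k * ((g' k).den : ℚ) :=
      ((eq_div_iff hden).1 (Rat.num_div_den (g' k)).symm).symm
    rw [hcast, ← mul_assoc]
    push_cast
    rw [hnum]
  choose e he using hint
  have hez : ∀ k, g' k = 0 → e k = 0 := by
    intro k hk
    have := he k
    rw [hk, zero_mul] at this
    exact_mod_cast this
  have henz : ∀ k, e k ≠ 0 → g' k ≠ 0 := fun k hk hg => hk (hez k hg)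
  have he0 : e i0.1 ≠ 0 := by
    intro h0
    have h1 : (0 : ℚ) = g' i0.1 * dden := by
      have := he i0.1; rw [h0] at this; exact_mod_cast this
    have h2 : g' i0.1 = g i0 := by
      rw [hg']
      simp only [dif_pos i0.2]
    have hd : (dden : ℚ) ≠ 0 := by positivity
    apply hi0
    rw [← h2]
    rcases mul_eq_zero.1 h1.symm with h | h
    · exact h
    · exact absurd h hd
  -- the integer relation
  have hrelQ : ∑ k, (e k : ℚ) • rQ (vk X nb k) = 0 := by
    calc ∑ k, (e k : ℚ) • rQ (vk X nb k)
        = ∑ k, (dden : ℚ) • (g' k • rQ (vk X nb k)) := by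
          refine Finset.sum_congr rfl ?_
          intro k _
          rw [he k, smul_smul, mul_comm]
      _ = (dden : ℚ) • ∑ k, g' k • rQ (vk X nb k) := (Finset.smul_sum).symm
      _ = 0 := by rw [hg'sum, smul_zero]
  have hrelZ : ∑ k, e k • vk X nb k = 0 := by
    funext j
    have hj := congrFun hrelQ j
    simp only [Finset.sum_apply, Pi.smul_apply, smul_eq_mul, Pi.zero_apply, rQ] at hj
    have hcast : (((∑ k, e k • vk X nb k) j : ℤ) : ℚ) = 0 := by
      rw [Finset.sum_apply]
      simp only [Pi.smul_apply, smul_eq_mul]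
      push_cast
      exact hj
    have : ((∑ k, e k • vk X nb k) j : ℤ) = 0 := by exact_mod_cast hcast
    simpa using this
  -- choose the maximal index and fix the sign
  set Su := Finset.univ.filter (fun k : Fin N => e k ≠ 0) with hSu
  have hSune : Su.Nonempty := ⟨i0.1, by rw [hSu]; simp [he0]⟩
  set q := Su.max' hSune with hq
  have hqmem : e q ≠ 0 := by
    have hmem : q ∈ Su := Su.max'_mem hSune
    rw [hSu, Finset.mem_filter] at hmem
    exact hmem.2
  have hqmax : ∀ k, e k ≠ 0 → k ≤ q := by
    intro k hk
    exact Finset.le_max' Su k (by rw [hSu]; simp [hk])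
  have hsupp : ∀ k, e k ≠ 0 → 1 ≤ h k := by
    intro k hk
    exact Nat.one_le_iff_ne_zero.2 (hg'mem k (henz k hk))
  rcases lt_or_gt_of_ne hqmem with hlt | hgt
  · exact ⟨e, q, hlt, hsupp, hqmax, hrelZ⟩
  · refine ⟨-e, q, by simp; omega, ?_, ?_, ?_⟩
    · intro k hk
      exact hsupp k (by simpa using hk)
    · intro k hk
      exact hqmax k (by simpa using hk)
    · have hneg : ∑ k, (-e) k • vk X nb k = -(∑ k, e k • vk X nb k) := by
        simp [neg_smul]
      rw [hneg, hrelZ, neg_zero]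

end Extract

section Terminal

lemma terminal
    (hspan : Submodule.span ℝ (Set.range fun k => (fun j => (X k j : ℝ))) = ⊤)
    (nb h : Fin N → ℕ) (hnb : ∀ k, 1 ≤ nb k) (hsum : ∑ k, h k = N)
    (hind : LinearIndependent ℚ
      (fun k : {k : Fin N // k ∈ Finset.univ.filter (fun k => h k ≠ 0)} => rQ (vk X nb k.1))) :
    Good X (Fprod X nb h) := by
  classical
  set Sf := Finset.univ.filter (fun k : Fin N => h k ≠ 0) with hSf
  set m := Fintype.card ↥Sf with hmc
  let eqv : ↥Sf ≃ Fin m := Fintype.equivFin ↥Sf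
  set w : Fin m → (Fin s → ℤ) := fun i => vk X nb (eqv.symm i).1 with hw
  set H : Fin m → ℕ := fun i => h (eqv.symm i).1 with hH
  have hli : LinearIndependent ℚ (fun i => rQ (w i)) :=
    hind.comp eqv.symm eqv.symm.injective
  have hmul : ∀ i, ∃ (n : ℕ) (k : Fin N), 0 < n ∧ w i = (n : ℤ) • X k :=
    fun i => ⟨nb (eqv.symm i).1, (eqv.symm i).1, hnb _, rfl⟩
  have hm_le : m ≤ s := by
    have h1 := hli.fintype_card_le_finrank
    rw [Module.finrank_fintype_fun_eq_card] at h1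
    simpa using h1
  have hsumH : ∑ i, H i = N := by
    have h1 : ∑ i : Fin m, H i = ∑ k : ↥Sf, h k.1 := Equiv.sum_comp eqv.symm (fun k : ↥Sf => h k.1)
    have h2 : ∑ k : ↥Sf, h k.1 = ∑ k ∈ Sf, h k := Finset.sum_coe_sort Sf h
    have h3 : ∑ k ∈ Sf, h k = ∑ k, h k := by
      refine Finset.sum_subset (Finset.subset_univ Sf) ?_
      intro k _ hk
      rw [hSf] at hk
      simpa using hk
    rw [h1, h2, h3, hsum]
  have hrestr : ∀ x, Fprod X nb h x = ∏ i, (D (w i) x ^ H i)⁻¹ := by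
    intro x
    have h1 : Fprod X nb h x = ∏ k ∈ Sf, (D (vk X nb k) x ^ h k)⁻¹ := by
      rw [Fprod]
      refine (Finset.prod_subset (Finset.subset_univ Sf) ?_).symm
      intro k _ hk
      rw [hSf] at hk
      have : h k = 0 := by simpa using hk
      rw [this, pow_zero, inv_one]
    have h2 : ∏ k ∈ Sf, (D (vk X nb k) x ^ h k)⁻¹
        = ∏ k : ↥Sf, (D (vk X nb k.1) x ^ h k.1)⁻¹ :=
      (Finset.prod_coe_sort Sf (fun k => (D (vk X nb k) x ^ h k)⁻¹)).symm
    have h3 : ∏ k : ↥Sf, (D (vk X nb k.1) x ^ h k.1)⁻¹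
        = ∏ i : Fin m, (D (w i) x ^ H i)⁻¹ :=
      (Equiv.prod_comp eqv.symm (fun k : ↥Sf => (D (vk X nb k.1) x ^ h k.1)⁻¹)).symm
    rw [h1, h2, h3]
  obtain ⟨A, H', hA1, hA2, hA3, hA4⟩ :=
    ext_basis X hspan (s - m) m (by omega) w H hli hmul
  refine Submodule.subset_span ?_
  refine ⟨A, H', 0, qindep_to_rindep A hA1, hA2, by rw [hA3, hsumH], inSpanX_zero X, ?_⟩
  intro p
  have hgoal : Fprod X nb h p.1 = E 0 p.1 * ∏ i, (D (A i) p.1 ^ H' i)⁻¹ := by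
    rw [E_zero, one_mul, hrestr p.1, hA4 p.1]
  exact hgoal

end Terminal

section Main

lemma main (hne : ∀ k, X k ≠ 0)
    (hspan : Submodule.span ℝ (Set.range fun k => (fun j => (X k j : ℝ))) = ⊤) :
    ∀ (f : ℕ) (nb h : Fin N → ℕ), (∀ k, 1 ≤ nb k) → (∑ k, h k = N) →
      N * N ≤ meas h + f → Good X (Fprod X nb h) := by
  classical
  intro f
  induction f with
  | zero =>
    intro nb h hnb hsum hf
    have hss : ∀ k k' : Fin N, h k ≠ 0 → h k' ≠ 0 → k = k' := by
      intro k k' hk hk'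
      have h1 := base_support h hsum (by omega) k hk
      have h2 := base_support h hsum (by omega) k' hk'
      exact Fin.ext (by omega)
    have hsub : Subsingleton {k : Fin N // k ∈ Finset.univ.filter (fun k => h k ≠ 0)} := by
      constructor
      rintro ⟨a, ha⟩ ⟨b, hb⟩
      rw [Finset.mem_filter] at ha hb
      exact Subtype.ext (hss a b ha.2 hb.2)
    refine terminal X hspan nb h hnb hsum ?_
    exact li_of_subsingleton _ (fun i => rQ_ne_zero (vk_ne_zero X hne hnb i.1))
  | succ f ih =>
    intro nb h hnb hsum hf
    by_cases hind : LinearIndependent ℚ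
      (fun k : {k : Fin N // k ∈ Finset.univ.filter (fun k => h k ≠ 0)} => rQ (vk X nb k.1))
    · exact terminal X hspan nb h hnb hsum hind
    · obtain ⟨e, q, heq, hsupp, hqmax, hrel⟩ := extract_relation X nb h hind
      have hstep := fun x (hx : Pos X x) =>
        step_key X nb h e q hnb heq hsupp hrel hx
      refine Good.congr X (Good.sum X (Tset e q)
        (fun l => fun x => gfun X nb h e q l x *
          Fprod X (Function.update nb q ((-(e q)).toNat * nb q))
            (Function.update (Function.update h l (h l - 1)) q (h q + 1)) x) ?_)
        (fun x hx => (hstep x hx).symm)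
      intro l hl
      have hlmem := hl
      rw [Tset, Finset.mem_filter, Finset.mem_erase] at hlmem
      obtain ⟨⟨hlq, -⟩, hel⟩ := hlmem
      have hllt : l < q := lt_of_le_of_ne (hqmax l hel) hlq
      have hl1 : 1 ≤ h l := hsupp l hel
      have hnb' : ∀ k, 1 ≤ Function.update nb q ((-(e q)).toNat * nb q) k := by
        intro k
        by_cases hk : k = q
        · rw [hk, Function.update_self]
          have h1 : 1 ≤ (-(e q)).toNat := by omega
          have h2 := hnb q
          exact Nat.one_le_iff_ne_zero.2 (Nat.mul_ne_zero (by omega) (by omega))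
        · rw [Function.update_of_ne hk]
          exact hnb k
      have hsum' : ∑ k, Function.update (Function.update h l (h l - 1)) q (h q + 1) k = N := by
        rw [update_sum_eq h hlq hl1, hsum]
      have hmeas : N * N ≤
          meas (Function.update (Function.update h l (h l - 1)) q (h q + 1)) + f := by
        have := update_meas h hlq hl1 hllt
        omega
      exact Good.mul_EF X (gfun_mem_EF X nb h e q l) (ih _ _ hnb' hsum' hmeas)

end Main

end ToricRed

/-- Theorem 4, toric reduction over ℝ: let `X ⊂ ℤ^s ∖ {0}` be a finite multiset
spanning `ℝ^s`, with `0` not a nontrivial nonnegative combination of its elements. Then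
`∏_{a∈X} 1/(1−e^{−⟨a,x⟩})` is, on the region where all `⟨a,x⟩ > 0`, a finite real linear
combination of functions `e^{⟨c,x⟩} ∏_{a∈A} 1/(1−e^{−⟨a,x⟩})^{h_a}`, where each `A` is a
linearly independent set of `s` vectors which are positive integer multiples of elements of
`X`, `∑_{a∈A} h_a = #X`, and `c` is an integer combination of elements of `X`. -/
theorem toric_reduction_real
    {s N : ℕ} (X : Fin N → (Fin s → ℤ))
    (hne : ∀ k, X k ≠ 0)
    (hspan : Submodule.span ℝ (Set.range fun k => (fun j => (X k j : ℝ))) = ⊤)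
    (hpos : ∀ c : Fin N → ℝ, (∀ k, 0 ≤ c k) →
      (∀ j, ∑ k, c k * (X k j : ℝ) = 0) → ∀ k, c k = 0) :
    ∃ (M : ℕ) (r : Fin M → ℝ) (A : Fin M → Fin s → (Fin s → ℤ))
      (h : Fin M → Fin s → ℕ) (c : Fin M → (Fin s → ℤ)),
      (∀ m, LinearIndependent ℝ (fun i => (fun j => (A m i j : ℝ)))) ∧
      (∀ m i, ∃ (n : ℕ) (k : Fin N), 0 < n ∧ A m i = (n : ℤ) • X k) ∧
      (∀ m, ∑ i, h m i = N) ∧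
      (∀ m, ∃ d : Fin N → ℤ, c m = ∑ k, d k • X k) ∧
      ∀ x : Fin s → ℝ, (∀ k, 0 < ∑ j, (X k j : ℝ) * x j) →
        ∏ k, (1 - Real.exp (-∑ j, (X k j : ℝ) * x j))⁻¹ =
          ∑ m, r m * Real.exp (∑ j, (c m j : ℝ) * x j) *
            ∏ i, ((1 - Real.exp (-∑ j, (A m i j : ℝ) * x j)) ^ h m i)⁻¹ := by
  classical
  have h0 := ToricRed.main X hne hspan (N * N) (fun _ => 1) (fun _ => 1)
      (fun _ => le_refl 1) (by simp) (Nat.le_add_left _ _)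
  have hGood : ToricRed.Good X
      (fun x => ∏ k, (1 - Real.exp (-∑ j, (X k j : ℝ) * x j))⁻¹) := by
    refine h0.congr X ?_
    intro x hx
    rw [ToricRed.Fprod]
    refine Finset.prod_congr rfl ?_
    intro k _
    rw [pow_one]
    simp [ToricRed.vk, ToricRed.D, ToricRed.z, ToricRed.pr]
  rw [ToricRed.Good, Submodule.mem_span_set'] at hGood
  obtain ⟨n, f, gg, hfg⟩ := hGood
  choose A hh cc hli hmul hsumh hcc hfun using fun i => (gg i).2
  refine ⟨n, f, A, hh, cc, hli, hmul, hsumh, hcc, ?_⟩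
  intro x hx
  have hx' : ToricRed.Pos X x := hx
  symm
  calc ∑ m, f m * Real.exp (∑ j, (cc m j : ℝ) * x j) *
        ∏ i, ((1 - Real.exp (-∑ j, (A m i j : ℝ) * x j)) ^ hh m i)⁻¹
      = ∑ i, (f i • (gg i : ToricRed.PT X → ℝ)) ⟨x, hx'⟩ := by
        refine Finset.sum_congr rfl ?_
        intro i _
        erw [Pi.smul_apply, smul_eq_mul, hfun i ⟨x, hx'⟩]
        simp only [ToricRed.E, ToricRed.D, ToricRed.z, ToricRed.pr]
        ring
    _ = ∏ k, (1 - Real.exp (-∑ j, (X k j : ℝ) * x j))⁻¹ := by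
        exact (Finset.sum_apply _ _ _).symm.trans (congrFun hfg ⟨x, hx'⟩)
end
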